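/- Let n ≥ 4 and let T be a d-equidistant ultrametric n-tree all of whose edge weights are nonnegative integers, with total weight D. Let v_1,…,v_{n−1} be an enumeration of the internal vertices with v_i ≤_T v_j implying j ≤ i, let α be an injective map from internal vertices to leaves with v_i ≤_T α(v_i) =: a_i, and let b_i be the unique leaf with v_i ≤_T b_i and b_i ∉ {a_1,…,a_i}. Let M be the n×n matrix over ℂ((t)) whose rows are (1,…,1), (x_i^{(1)})_i, ((x_i^{(1)})²)_i, (x_i^{(2)})_i, …, (x_i^{(n−2)})_i, where x_i^{(j)} = Σ_e a_j(e)·t^{−h(e)} (sum over edges e on the path from the root to leaf i) for complex variables a_j(e), and let M* be the column reduction (c_{a_{n−1},b_{n−1}} ∘ ⋯ ∘ c_{a_2,b_2} ∘ c_{a_1,b_1})(M), where c_{a,b} subtracts column b from column a. Then there exists a nonzero polynomial P over ℂ in the variables a_j(e) such that for every assignment with P ≠ 0 and every permutation σ of {1,…,n} with ∏_{i=1}^n M*_{i,σ(i)} ≠ 0, the t-adic valuation of ∏_{i=1}^n M*_{i,σ(i)} equals −(Σ_{i=1}^{n−1} h(v_i) + d) = −D. -/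

import Mathlib

open SimpleGraph

/-- A `d`-equidistant ultrametric `n`-tree with nonnegative integer edge weights:
a rooted binary tree whose `n` leaves are labeled by `Fin n`, with a nonnegative
integer weight on each edge, such that the path from the root to every leaf has
total weight `d`, and the path between any two distinct leaves has positive total
weight. -/
structure UltraTree (n : ℕ) where
  V : Type
  [fintypeV : Fintype V]
  [decEqV : DecidableEq V]
  G : SimpleGraph V
  [decAdj : DecidableRel G.Adj]
  isTree : G.IsTree
  root : V
  root_deg : G.degree root = 2
  deg_of_ne_root : ∀ v : V, v ≠ root → G.degree v = 3 ∨ G.degree v = 1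
  leaf : Fin n → V
  leaf_inj : Function.Injective leaf
  leaf_deg : ∀ i : Fin n, G.degree (leaf i) = 1
  leaf_surj : ∀ v : V, G.degree v = 1 → ∃ i : Fin n, leaf i = v
  d : ℤ
  weight : Sym2 V → ℤ
  weight_nonneg : ∀ e ∈ G.edgeSet, 0 ≤ weight e
  equidistant : ∀ i : Fin n, ∀ p : G.Walk root (leaf i), p.IsPath →
    (p.edges.map weight).sum = d
  leafpair_pos : ∀ i j : Fin n, i ≠ j →
    ∀ p : G.Walk (leaf i) (leaf j), p.IsPath → 0 < (p.edges.map weight).sum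

attribute [instance] UltraTree.fintypeV UltraTree.decEqV UltraTree.decAdj

/-- The unique path from the root to `v`. -/
noncomputable def rootPath {n : ℕ} (T : UltraTree n) (v : T.V) :
    T.G.Walk T.root v :=
  (T.isTree.existsUnique_path T.root v).exists.choose

/-- `depth T v` is the total weight of the (unique) path from the root to `v`. -/
noncomputable def depth {n : ℕ} (T : UltraTree n) (v : T.V) : ℤ :=
  ((rootPath T v).edges.map T.weight).sum

/-- For an edge `e`, `hEdge T e = d - depth u` where `u` is the endpoint of `e`
nearer the root (since the weights are nonnegative, this is the endpoint of
smaller depth). -/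
noncomputable def hEdge {n : ℕ} (T : UltraTree n) (e : Sym2 T.V) : ℤ :=
  T.d - Sym2.lift ⟨fun u w => min (depth T u) (depth T w),
    fun u w => by simp [min_comm]⟩ e

/-- `xval T a j i` is `x_i^{(j)} = Σ_e a_j(e) t^{-h(e)} ∈ ℂ((t))`, the sum running
over the edges `e` on the path from the root to leaf `i`. -/
noncomputable def xval {n : ℕ} (T : UltraTree n) (a : ℕ → Sym2 T.V → ℂ)
    (j : ℕ) (i : Fin n) : LaurentSeries ℂ :=
  ((rootPath T (T.leaf i)).edges.map
    (fun e => HahnSeries.single (-(hEdge T e)) (a j e))).sum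

/-- The matrix `M` whose rows are `(1,…,1)`, `(x_i^{(1)})_i`, `((x_i^{(1)})²)_i`,
`(x_i^{(2)})_i`, …, `(x_i^{(n-2)})_i`. -/
noncomputable def Mmat {n : ℕ} (T : UltraTree n) (a : ℕ → Sym2 T.V → ℂ) :
    Matrix (Fin n) (Fin n) (LaurentSeries ℂ) :=
  fun r c =>
    if r.val = 0 then 1
    else if r.val = 1 then xval T a 1 c
    else if r.val = 2 then (xval T a 1 c) ^ 2
    else xval T a (r.val - 1) c

/-- The tree order on `T`: `v ≤_T w` iff `v` lies on the (unique) path from the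
root to `w`. -/
def treeLE {n : ℕ} (T : UltraTree n) (v w : T.V) : Prop :=
  ∀ p : T.G.Walk T.root w, p.IsPath → v ∈ p.support

/-- A vertex is internal iff it is the root or has degree 3. -/
def isInternal {n : ℕ} (T : UltraTree n) (v : T.V) : Prop :=
  v = T.root ∨ T.G.degree v = 3

/-- The column operation `c_{p,q}`: subtract column `q` from column `p`. -/
noncomputable def colRed {n : ℕ} (N : Matrix (Fin n) (Fin n) (LaurentSeries ℂ)) (p q : Fin n) :
    Matrix (Fin n) (Fin n) (LaurentSeries ℂ) :=
  N.updateCol p (fun r => N r p - N r q)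

/-- The column reduction `M* = (c_{a_{n-1},b_{n-1}} ∘ ⋯ ∘ c_{a_1,b_1})(M)`:
first subtract column `b 0` from column `a 0`, then column `b 1` from column
`a 1`, and so on. -/
noncomputable def Mstar {n : ℕ} (T : UltraTree n) (av : ℕ → Sym2 T.V → ℂ)
    (a b : Fin (n - 1) → Fin n) : Matrix (Fin n) (Fin n) (LaurentSeries ℂ) :=
  (List.finRange (n - 1)).foldl (fun N i => colRed N (a i) (b i)) (Mmat T av)


section Dev
open SimpleGraph Walk

variable {n : ℕ} (T : UltraTree n)

lemma rp_isPath (v : T.V) : (rootPath T v).IsPath :=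
  (T.isTree.existsUnique_path T.root v).exists.choose_spec

lemma rp_unique {v : T.V} (p : T.G.Walk T.root v) (hp : p.IsPath) : p = rootPath T v :=
  (T.isTree.existsUnique_path T.root v).unique hp (rp_isPath T v)

lemma rootPath_root : rootPath T T.root = Walk.nil :=
  (rp_unique T _ Walk.IsPath.nil).symm

lemma depth_root : depth T T.root = 0 := by
  rw [depth, rootPath_root]; simp

lemma treeLE_iff {v w : T.V} : treeLE T v w ↔ v ∈ (rootPath T w).support := by
  constructor
  · intro h; exact h _ (rp_isPath T w)
  · intro h p hp; rwa [rp_unique T p hp]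

lemma treeLE_refl (v : T.V) : treeLE T v v := fun p _ => p.end_mem_support

lemma rp_takeUntil {w : T.V} (v : T.V) (h : v ∈ (rootPath T w).support) :
    (rootPath T w).takeUntil v h = rootPath T v :=
  rp_unique T _ ((rp_isPath T w).takeUntil h)

lemma treeLE_trans {u v w : T.V} (h1 : treeLE T u v) (h2 : treeLE T v w) : treeLE T u w := by
  rw [treeLE_iff] at *
  have h3 := (rootPath T w).support_takeUntil_subset h2
  rw [rp_takeUntil T v h2] at h3
  exact h3 h1

lemma wsum_nonneg {u v : T.V} (p : T.G.Walk u v) : 0 ≤ (p.edges.map T.weight).sum := by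
  apply List.sum_nonneg
  intro x hx
  obtain ⟨e, he, rfl⟩ := List.mem_map.mp hx
  exact T.weight_nonneg e (p.edges_subset_edgeSet he)

lemma hEdge_mk (u w : T.V) : hEdge T s(u, w) = T.d - min (depth T u) (depth T w) := rfl

/-- Master descent lemma. -/
lemma descend {u z : T.V} (q : T.G.Walk u z) (hq : ((rootPath T u).append q).IsPath) :
    rootPath T z = (rootPath T u).append q ∧
    depth T z = depth T u + (q.edges.map T.weight).sum ∧
    ∀ e ∈ q.edges, depth T u ≤ T.d - hEdge T e := by
  induction q with
  | nil =>
    refine ⟨(rp_unique T _ (by simpa using hq)).symm, by simp, by simp⟩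
  | @cons u u' z adj q ih =>
    rw [← Walk.concat_append] at hq
    have hcp : ((rootPath T u).concat adj).IsPath := hq.of_append_left
    have hru' : rootPath T u' = (rootPath T u).concat adj := (rp_unique T _ hcp).symm
    have hmem : s(u, u') ∈ T.G.edgeSet := adj
    have hw : 0 ≤ T.weight s(u, u') := T.weight_nonneg _ hmem
    have hdep : depth T u' = depth T u + T.weight s(u, u') := by
      rw [depth, depth, hru', Walk.edges_concat]
      simp
    have hq' : ((rootPath T u').append q).IsPath := by rwa [hru']
    obtain ⟨h1, h2, h3⟩ := ih hq'
    refine ⟨?_, ?_, ?_⟩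
    · rw [h1, hru', Walk.concat_append]
    · rw [h2, hdep, Walk.edges_cons]
      simp [add_assoc]
    · intro e he
      rw [Walk.edges_cons] at he
      rcases List.mem_cons.mp he with rfl | he
      · rw [hEdge_mk]
        have : min (depth T u) (depth T u') = depth T u := min_eq_left (by omega)
        omega
      · have := h3 e he
        omega

lemma depth_nonneg (z : T.V) : 0 ≤ depth T z := by
  have := wsum_nonneg T (rootPath T z)
  rw [depth]; exact this

lemma hEdge_le_d {z : T.V} {e : Sym2 T.V} (he : e ∈ (rootPath T z).edges) :
    hEdge T e ≤ T.d := by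
  have h := (descend T (rootPath T z) (by rw [rootPath_root]; simpa using rp_isPath T z)).2.2
  have h1 := h e he
  have h0 := depth_root T
  omega

lemma anc_getVert {z c : T.V} (h : c ∈ (rootPath T z).support) :
    (rootPath T z).getVert (rootPath T c).length = c := by
  have hspec := (rootPath T z).take_spec h
  rw [rp_takeUntil T c h] at hspec
  conv_lhs => rw [← hspec]
  rw [Walk.getVert_append]
  simp [Walk.getVert_zero]

lemma anc_eq_of_length {z c c' : T.V} (h : c ∈ (rootPath T z).support)
    (h' : c' ∈ (rootPath T z).support)
    (hl : (rootPath T c).length = (rootPath T c').length) : c = c' := by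
  have h1 := anc_getVert T h
  have h2 := anc_getVert T h'
  rw [hl] at h1; rw [h1] at h2; exact h2

def childRel (w c : T.V) : Prop := ∃ h : T.G.Adj w c, rootPath T c = (rootPath T w).concat h

lemma childRel_adj {w c : T.V} (h : childRel T w c) : T.G.Adj w c := h.choose

lemma childRel_length {w c : T.V} (h : childRel T w c) :
    (rootPath T c).length = (rootPath T w).length + 1 := by
  obtain ⟨h, hc⟩ := h
  rw [hc, Walk.length_concat]

lemma childRel_not_mem {w c : T.V} (h : childRel T w c) : c ∉ (rootPath T w).support := by
  obtain ⟨h, hc⟩ := h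
  have hp := rp_isPath T c
  rw [hc] at hp
  have h2 := hp.support_nodup
  rw [Walk.support_concat] at h2
  simp [List.concat_eq_append, List.nodup_append] at h2
  exact fun hc => h2.2 c hc rfl

lemma treeLE_of_child {w c : T.V} (h : childRel T w c) : treeLE T w c := by
  rw [treeLE_iff]
  obtain ⟨h, hc⟩ := h
  rw [hc, Walk.support_concat]
  simp [Walk.end_mem_support]

lemma not_treeLE_of_child {w c : T.V} (h : childRel T w c) : ¬ treeLE T c w := by
  rw [treeLE_iff]
  exact childRel_not_mem T h

lemma child_ne {w c : T.V} (h : childRel T w c) : c ≠ w :=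
  fun he => (childRel_adj T h).ne' he

lemma root_no_parent (c : T.V) : ¬ childRel T c T.root := by
  intro h
  have := childRel_length T h
  rw [rootPath_root] at this
  simp at this

lemma parent_unique {w w' c : T.V} (h : childRel T w c) (h' : childRel T w' c) : w = w' := by
  obtain ⟨ha, hc⟩ := h
  obtain ⟨ha', hc'⟩ := h'
  have hl : (rootPath T w).length = (rootPath T w').length := by
    have h1 : ((rootPath T w).concat ha).length = ((rootPath T w').concat ha').length := by
      rw [← hc, ← hc']
    rwa [Walk.length_concat, Walk.length_concat, Nat.add_right_cancel_iff] at h1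
  have e1 : (rootPath T c).getVert (rootPath T w).length = w := by
    rw [hc, Walk.concat_eq_append, Walk.getVert_append]
    simp [Walk.getVert_zero]
  have e2 : (rootPath T c).getVert (rootPath T w').length = w' := by
    rw [hc', Walk.concat_eq_append, Walk.getVert_append]
    simp [Walk.getVert_zero]
  rw [← hl] at e2
  rw [e1] at e2; exact e2

lemma adj_dichotomy {w c : T.V} (hadj : T.G.Adj w c) : childRel T w c ∨ childRel T c w := by
  by_cases h : c ∈ (rootPath T w).support
  · right
    have hq : (rootPath T w).dropUntil c h = Walk.cons hadj.symm Walk.nil := by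
      apply (T.isTree.existsUnique_path c w).unique ((rp_isPath T w).dropUntil h)
      apply Walk.IsPath.cons Walk.IsPath.nil
      simp [hadj.ne']
    have hspec := (rootPath T w).take_spec h
    rw [rp_takeUntil T c h, hq] at hspec
    exact ⟨hadj.symm, by rw [← hspec, Walk.concat_eq_append]⟩
  · left
    refine ⟨hadj, (rp_unique T _ ?_).symm⟩
    apply Walk.IsPath.mk'
    rw [Walk.support_concat]
    simp [List.concat_eq_append, List.nodup_append]
    exact ⟨(rp_isPath T w).support_nodup, fun x hx hxc => h (hxc ▸ hx)⟩

lemma parent_exists {w : T.V} (hw : w ≠ T.root) : ∃ p, childRel T p w := by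
  rcases hp : rootPath T w with _ | ⟨hadj, q⟩
  · exact absurd rfl hw
  · obtain ⟨y, r, h', hcq⟩ := Walk.exists_cons_eq_concat hadj q
    have hrp : (r.concat h').IsPath := by
      rw [← hcq, ← hp]; exact rp_isPath T w
    have hr : r.IsPath := by
      rw [Walk.concat_eq_append] at hrp
      exact hrp.of_append_left
    refine ⟨y, h', ?_⟩
    rw [hp, hcq, rp_unique T r hr]

lemma child_step {w z : T.V} (hle : treeLE T w z) (hne : w ≠ z) :
    ∃ c, childRel T w c ∧ treeLE T c z := by
  rw [treeLE_iff] at hle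
  have hspec := (rootPath T z).take_spec hle
  rw [rp_takeUntil T w hle] at hspec
  set q := (rootPath T z).dropUntil w hle with hqdef
  clear_value q
  rcases q with _ | ⟨hadj, q'⟩
  · exact absurd rfl hne
  · rename_i c
    have hcp : ((rootPath T w).concat hadj).IsPath := by
      have : (((rootPath T w).concat hadj).append q').IsPath := by
        rw [Walk.concat_append, hspec]; exact rp_isPath T z
      exact this.of_append_left
    refine ⟨c, ⟨hadj, (rp_unique T _ hcp).symm⟩, ?_⟩
    rw [treeLE_iff, ← hspec, Walk.mem_support_append_iff]
    right
    rw [Walk.support_cons]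
    exact List.mem_cons_of_mem _ (Walk.start_mem_support q')
open Classical in
noncomputable def below (w : T.V) : Finset T.V := Finset.univ.filter (fun z => treeLE T w z)

open Classical in
noncomputable def childFinset (w : T.V) : Finset T.V :=
  Finset.univ.filter (fun c => childRel T w c)

lemma mem_below {w z : T.V} : z ∈ below T w ↔ treeLE T w z := by
  simp [below]

lemma mem_childFinset {w c : T.V} : c ∈ childFinset T w ↔ childRel T w c := by
  simp [childFinset]

lemma deg_one_end {z w : T.V} (hdeg : T.G.degree w = 1) (h : treeLE T w z) : w = z := by
  by_contra hne
  have hwroot : w ≠ T.root := fun he => by rw [he] at hdeg; rw [T.root_deg] at hdeg; omega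
  obtain ⟨c, hc, _⟩ := child_step T h hne
  obtain ⟨p, hp⟩ := parent_exists T hwroot
  have hcp : c ≠ p := by
    intro he
    subst he
    have h1 := childRel_length T hc
    have h2 := childRel_length T hp
    omega
  have hsub : ({c, p} : Finset T.V) ⊆ T.G.neighborFinset w := by
    intro x hx
    rcases Finset.mem_insert.mp hx with rfl | hx
    · exact (SimpleGraph.mem_neighborFinset _ _ _).mpr (childRel_adj T hc)
    · rw [Finset.mem_singleton] at hx
      subst hx
      exact (SimpleGraph.mem_neighborFinset _ _ _).mpr (childRel_adj T hp).symm
  have h2 : 2 ≤ T.G.degree w := by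
    have := Finset.card_le_card hsub
    rwa [Finset.card_pair hcp] at this
  omega

lemma internal_not_deg_one {w : T.V} (hw : isInternal T w) : T.G.degree w ≠ 1 := by
  rcases hw with rfl | h3
  · rw [T.root_deg]; omega
  · omega

lemma internal_or_leaf (w : T.V) : isInternal T w ∨ T.G.degree w = 1 := by
  by_cases hw : w = T.root
  · left; left; exact hw
  · rcases T.deg_of_ne_root w hw with h | h
    · left; right; exact h
    · right; exact h

lemma childFinset_of_leaf {w : T.V} (hdeg : T.G.degree w = 1) : childFinset T w = ∅ := by
  rw [Finset.eq_empty_iff_forall_notMem]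
  intro c hc
  rw [mem_childFinset] at hc
  have hwroot : w ≠ T.root := fun he => by rw [he] at hdeg; rw [T.root_deg] at hdeg; omega
  obtain ⟨p, hp⟩ := parent_exists T hwroot
  have hcp : c ≠ p := by
    intro he
    subst he
    have h1 := childRel_length T hc
    have h2 := childRel_length T hp
    omega
  have hsub : ({c, p} : Finset T.V) ⊆ T.G.neighborFinset w := by
    intro x hx
    rcases Finset.mem_insert.mp hx with rfl | hx
    · exact (SimpleGraph.mem_neighborFinset _ _ _).mpr (childRel_adj T hc)
    · rw [Finset.mem_singleton] at hx
      subst hx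
      exact (SimpleGraph.mem_neighborFinset _ _ _).mpr (childRel_adj T hp).symm
  have h2 : 2 ≤ T.G.degree w := by
    have := Finset.card_le_card hsub
    rwa [Finset.card_pair hcp] at this
  omega

lemma card_childFinset {w : T.V} (hw : isInternal T w) : (childFinset T w).card = 2 := by
  by_cases hroot : w = T.root
  · subst hroot
    have : childFinset T T.root = T.G.neighborFinset T.root := by
      ext c
      rw [mem_childFinset, SimpleGraph.mem_neighborFinset]
      constructor
      · exact fun h => childRel_adj T h
      · intro h
        rcases adj_dichotomy T h with h | h
        · exact h
        · exact absurd h (root_no_parent T c)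
    rw [this]
    exact T.root_deg
  · have hdeg3 : T.G.degree w = 3 := by
      rcases hw with rfl | h
      · exact absurd rfl hroot
      · exact h
    obtain ⟨p, hp⟩ := parent_exists T hroot
    have : childFinset T w = (T.G.neighborFinset w).erase p := by
      ext c
      rw [mem_childFinset, Finset.mem_erase, SimpleGraph.mem_neighborFinset]
      constructor
      · intro h
        refine ⟨?_, childRel_adj T h⟩
        intro he
        subst he
        have h1 := childRel_length T h
        have h2 := childRel_length T hp
        omega
      · rintro ⟨hne, hadj⟩
        rcases adj_dichotomy T hadj with h | h
        · exact h
        · exact absurd (parent_unique T hp h) (Ne.symm hne)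
    rw [this, Finset.card_erase_of_mem
      ((SimpleGraph.mem_neighborFinset _ _ _).mpr (childRel_adj T hp).symm)]
    rw [SimpleGraph.degree] at hdeg3
    omega

lemma below_children_disjoint {w c c' : T.V} (hc : childRel T w c) (hc' : childRel T w c')
    (hne : c ≠ c') : Disjoint (below T c) (below T c') := by
  rw [Finset.disjoint_left]
  intro z hz hz'
  rw [mem_below] at hz hz'
  apply hne
  apply anc_eq_of_length T ((treeLE_iff T).mp hz) ((treeLE_iff T).mp hz')
  rw [childRel_length T hc, childRel_length T hc']

lemma below_eq (w : T.V) :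
    below T w = insert w ((childFinset T w).biUnion (fun c => below T c)) := by
  ext z
  rw [mem_below, Finset.mem_insert, Finset.mem_biUnion]
  constructor
  · intro h
    by_cases hz : w = z
    · left; exact hz.symm
    · right
      obtain ⟨c, hc, hcz⟩ := child_step T h hz
      exact ⟨c, (mem_childFinset T).mpr hc, (mem_below T).mpr hcz⟩
  · rintro (rfl | ⟨c, hc, hz⟩)
    · exact treeLE_refl T z
    · rw [mem_childFinset] at hc
      rw [mem_below] at hz
      exact treeLE_trans T (treeLE_of_child T hc) hz

lemma not_mem_below_child {w c : T.V} (hc : childRel T w c) : w ∉ below T c := by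
  rw [mem_below]
  exact not_treeLE_of_child T hc

lemma below_child_ssubset {w c : T.V} (hc : childRel T w c) : below T c ⊂ below T w := by
  constructor
  · intro z hz
    rw [mem_below] at hz ⊢
    exact treeLE_trans T (treeLE_of_child T hc) hz
  · intro hsub
    exact not_mem_below_child T hc (hsub ((mem_below T).mpr (treeLE_refl T w)))

open Classical in
/-- The key counting lemma: in the subtree below any vertex, the number of leaves
exceeds the number of internal vertices by exactly one. -/
lemma count_lemma : ∀ w : T.V,
    ((below T w).filter (fun z => T.G.degree z = 1)).card =
      ((below T w).filter (fun z => isInternal T z)).card + 1 := by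
  have : ∀ (k : ℕ) (w : T.V), (below T w).card ≤ k →
      ((below T w).filter (fun z => T.G.degree z = 1)).card =
      ((below T w).filter (fun z => isInternal T z)).card + 1 := by
    intro k
    induction k with
    | zero =>
      intro w hw
      exfalso
      have : w ∈ below T w := (mem_below T).mpr (treeLE_refl T w)
      have := Finset.card_pos.mpr ⟨w, this⟩
      omega
    | succ k ih =>
      intro w hw
      rcases internal_or_leaf T w with hint | hleaf
      · -- internal case
        have hdec := below_eq T w
        have hnotmem : w ∉ (childFinset T w).biUnion (fun c => below T c) := by
          rw [Finset.mem_biUnion]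
          rintro ⟨c, hc, hmem⟩
          exact not_mem_below_child T ((mem_childFinset T).mp hc) hmem
        have hdisj : ∀ c ∈ childFinset T w, ∀ c' ∈ childFinset T w, c ≠ c' →
            Disjoint (below T c) (below T c') := by
          intro c hc c' hc' hne
          exact below_children_disjoint T ((mem_childFinset T).mp hc)
            ((mem_childFinset T).mp hc') hne
        have hcardlt : ∀ c ∈ childFinset T w, (below T c).card ≤ k := by
          intro c hc
          have := Finset.card_lt_card (below_child_ssubset T ((mem_childFinset T).mp hc))
          omega
        have hL : ((below T w).filter (fun z => T.G.degree z = 1)).card =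
            ∑ c ∈ childFinset T w, ((below T c).filter (fun z => T.G.degree z = 1)).card := by
          rw [hdec, Finset.filter_insert, if_neg (internal_not_deg_one T hint),
            Finset.filter_biUnion, Finset.card_biUnion
              (fun c hc c' hc' hne => Finset.disjoint_filter_filter (hdisj c hc c' hc' hne))]
        have hI : ((below T w).filter (fun z => isInternal T z)).card =
            1 + ∑ c ∈ childFinset T w, ((below T c).filter (fun z => isInternal T z)).card := by
          rw [hdec, Finset.filter_insert, if_pos hint, Finset.filter_biUnion]
          have hnm : w ∉ (childFinset T w).biUnion
              (fun c => (below T c).filter (fun z => isInternal T z)) := by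
            intro hmem
            rw [Finset.mem_biUnion] at hmem
            obtain ⟨c, hc, hmem⟩ := hmem
            rw [Finset.mem_filter] at hmem
            apply hnotmem
            rw [Finset.mem_biUnion]
            exact ⟨c, hc, hmem.1⟩
          rw [Finset.card_insert_of_notMem hnm, Finset.card_biUnion
            (fun c hc c' hc' hne => Finset.disjoint_filter_filter (hdisj c hc c' hc' hne))]
          omega
        rw [hL, hI]
        have hsum : ∑ c ∈ childFinset T w, ((below T c).filter (fun z => T.G.degree z = 1)).card
            = ∑ c ∈ childFinset T w,
              (((below T c).filter (fun z => isInternal T z)).card + 1) := by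
          apply Finset.sum_congr rfl
          intro c hc
          exact ih c (hcardlt c hc)
        rw [hsum, Finset.sum_add_distrib, Finset.sum_const, card_childFinset T hint]
        simp only [smul_eq_mul, mul_one]
        omega
      · -- leaf case
        have hsingle : below T w = {w} := by
          ext z
          rw [mem_below, Finset.mem_singleton]
          constructor
          · intro h; exact (deg_one_end T hleaf h).symm
          · rintro rfl; exact treeLE_refl T z
        rw [hsingle]
        rw [Finset.filter_singleton, if_pos hleaf, Finset.filter_singleton,
          if_neg (fun h => internal_not_deg_one T h hleaf)]
        simp
  exact fun w => this (below T w).card w le_rfl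
noncomputable def parentOf (w : T.V) : T.V :=
  if h : w ≠ T.root then (parent_exists T h).choose else T.root

lemma parentOf_spec {w : T.V} (h : w ≠ T.root) : childRel T (parentOf T w) w := by
  rw [parentOf, dif_pos h]
  exact (parent_exists T h).choose_spec

lemma parentOf_eq {w c : T.V} (h : childRel T w c) : parentOf T c = w := by
  have hc : c ≠ T.root := fun he => root_no_parent T w (he ▸ h)
  exact parent_unique T (parentOf_spec T hc) h

lemma depth_child {w c : T.V} (h : childRel T w c) :
    depth T c = depth T w + T.weight s(w, c) := by
  obtain ⟨hadj, hc⟩ := h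
  rw [depth, depth, hc, Walk.edges_concat]
  simp

lemma depth_leaf (i : Fin n) : depth T (T.leaf i) = T.d :=
  T.equidistant i (rootPath T (T.leaf i)) (rp_isPath T _)

lemma leaf_filter : (Finset.univ.filter (fun z => T.G.degree z = 1)) =
    Finset.univ.image T.leaf := by
  ext z
  simp only [Finset.mem_filter, Finset.mem_univ, true_and, Finset.mem_image]
  constructor
  · intro h
    obtain ⟨i, hi⟩ := T.leaf_surj z h
    exact ⟨i, hi⟩
  · rintro ⟨i, rfl⟩
    exact T.leaf_deg i

open Classical in
lemma weight_identity (hn : 1 ≤ n) (v : Fin (n - 1) → T.V)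
    (hv_int : ∀ i, isInternal T (v i)) (hv_inj : Function.Injective v)
    (hv_surj : ∀ w : T.V, isInternal T w → ∃ i, v i = w) :
    (∑ i : Fin (n - 1), (T.d - depth T (v i))) + T.d = ∑ e ∈ T.G.edgeFinset, T.weight e := by
  -- the set of non-root vertices
  set S : Finset T.V := Finset.univ.erase T.root with hS
  -- edge finset as image of parent edges
  have himage : T.G.edgeFinset = S.image (fun c => s(parentOf T c, c)) := by
    ext e
    induction e with
    | _ x y =>
      rw [SimpleGraph.mem_edgeFinset, Finset.mem_image]
      constructor
      · intro hadj
        rw [SimpleGraph.mem_edgeSet] at hadj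
        rcases adj_dichotomy T hadj with h | h
        · refine ⟨y, ?_, ?_⟩
          · rw [hS, Finset.mem_erase]
            exact ⟨fun he => root_no_parent T x (he ▸ h), Finset.mem_univ y⟩
          · rw [parentOf_eq T h]
        · refine ⟨x, ?_, ?_⟩
          · rw [hS, Finset.mem_erase]
            exact ⟨fun he => root_no_parent T y (he ▸ h), Finset.mem_univ x⟩
          · rw [parentOf_eq T h, Sym2.eq_swap]
      · rintro ⟨c, hc, he⟩
        rw [hS, Finset.mem_erase] at hc
        have hadj := childRel_adj T (parentOf_spec T hc.1)
        rw [SimpleGraph.mem_edgeSet]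
        rcases Sym2.eq_iff.mp he with ⟨h1, h2⟩ | ⟨h1, h2⟩
        · subst h1; subst h2; exact hadj
        · subst h1; subst h2; exact hadj.symm
  have hinj : ∀ c ∈ S, ∀ c' ∈ S, s(parentOf T c, c) = s(parentOf T c', c') → c = c' := by
    intro c hc c' hc' he
    rcases Sym2.eq_iff.mp he with ⟨h1, h2⟩ | ⟨h1, h2⟩
    · exact h2
    · rw [hS, Finset.mem_erase] at hc hc'
      have e1 := parentOf_spec T hc.1
      have e2 := parentOf_spec T hc'.1
      rw [h1] at e1
      rw [← h2] at e2
      have l1 := childRel_length T e1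
      have l2 := childRel_length T e2
      omega
  have hD : ∑ e ∈ T.G.edgeFinset, T.weight e =
      ∑ c ∈ S, (depth T c - depth T (parentOf T c)) := by
    rw [himage, Finset.sum_image hinj]
    apply Finset.sum_congr rfl
    intro c hc
    rw [hS, Finset.mem_erase] at hc
    rw [depth_child T (parentOf_spec T hc.1)]
    ring
  -- sum of depths over S
  have hS1 : ∑ c ∈ S, depth T c = ∑ c : T.V, depth T c := by
    rw [hS]
    rw [Finset.sum_erase _ (by rw [depth_root])]
  -- sum of parent depths, fiberwise
  have hfib : ∑ c ∈ S, depth T (parentOf T c) =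
      ∑ w : T.V, ∑ c ∈ S.filter (fun c => parentOf T c = w), depth T (parentOf T c) := by
    rw [Finset.sum_fiberwise_of_maps_to (fun c _ => Finset.mem_univ (parentOf T c))]
  have hfib2 : ∀ w : T.V, S.filter (fun c => parentOf T c = w) = childFinset T w := by
    intro w
    ext c
    rw [Finset.mem_filter, mem_childFinset, hS, Finset.mem_erase]
    constructor
    · rintro ⟨⟨hroot, _⟩, hpar⟩
      rw [← hpar]
      exact parentOf_spec T hroot
    · intro h
      have hc : c ≠ T.root := fun he => root_no_parent T w (he ▸ h)
      exact ⟨⟨hc, Finset.mem_univ c⟩, parentOf_eq T h⟩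
  have hfib3 : ∑ c ∈ S, depth T (parentOf T c) =
      ∑ w : T.V, ((childFinset T w).card : ℤ) * depth T w := by
    rw [hfib]
    apply Finset.sum_congr rfl
    intro w _
    rw [hfib2 w]
    have hcg : ∀ c ∈ childFinset T w, depth T (parentOf T c) = depth T w := by
      intro c hc
      rw [mem_childFinset] at hc
      rw [parentOf_eq T hc]
    rw [Finset.sum_congr rfl hcg, Finset.sum_const, nsmul_eq_mul]
  -- split vertex sums into leaves and internals
  have hsplit : ∀ f : T.V → ℤ, ∑ w : T.V, f w =
      (∑ w ∈ Finset.univ.filter (fun z => T.G.degree z = 1), f w) +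
      ∑ w ∈ Finset.univ.filter (fun z => ¬ T.G.degree z = 1), f w :=
    fun f => (Finset.sum_filter_add_sum_filter_not _ _ f).symm
  have hint_filter : Finset.univ.filter (fun z => ¬ T.G.degree z = 1) =
      Finset.univ.image v := by
    ext w
    simp only [Finset.mem_filter, Finset.mem_univ, true_and, Finset.mem_image]
    constructor
    · intro h
      have : isInternal T w := by
        rcases internal_or_leaf T w with h' | h'
        · exact h'
        · exact absurd h' h
      obtain ⟨i, hi⟩ := hv_surj w this
      exact ⟨i, hi⟩
    · rintro ⟨i, rfl⟩
      exact internal_not_deg_one T (hv_int i)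
  have hleafdepth : ∑ w ∈ Finset.univ.filter (fun z => T.G.degree z = 1), depth T w
      = (n : ℤ) * T.d := by
    rw [leaf_filter, Finset.sum_image (fun i _ j _ he => T.leaf_inj he)]
    rw [Finset.sum_congr rfl (fun i _ => depth_leaf T i), Finset.sum_const, nsmul_eq_mul]
    simp
  have hintdepth : ∑ w ∈ Finset.univ.filter (fun z => ¬ T.G.degree z = 1), depth T w
      = ∑ i : Fin (n - 1), depth T (v i) := by
    rw [hint_filter, Finset.sum_image (fun i _ j _ he => hv_inj he)]
  have hchildcard : ∑ w : T.V, ((childFinset T w).card : ℤ) * depth T w =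
      2 * ∑ i : Fin (n - 1), depth T (v i) := by
    rw [hsplit (fun w => ((childFinset T w).card : ℤ) * depth T w)]
    have hzero : ∑ w ∈ Finset.univ.filter (fun z => T.G.degree z = 1),
        ((childFinset T w).card : ℤ) * depth T w = 0 := by
      apply Finset.sum_eq_zero
      intro w hw
      rw [Finset.mem_filter] at hw
      rw [childFinset_of_leaf T hw.2]
      simp
    rw [hzero, zero_add, hint_filter, Finset.sum_image (fun i _ j _ he => hv_inj he)]
    rw [Finset.mul_sum]
    apply Finset.sum_congr rfl
    intro i _
    rw [card_childFinset T (hv_int i)]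
    simp
  have hsum_sub : ∑ c ∈ S, (depth T c - depth T (parentOf T c)) =
      (∑ c ∈ S, depth T c) - ∑ c ∈ S, depth T (parentOf T c) := Finset.sum_sub_distrib _ _
  have hfinal : ∑ e ∈ T.G.edgeFinset, T.weight e =
      (n : ℤ) * T.d - ∑ i : Fin (n - 1), depth T (v i) := by
    rw [hD, hsum_sub, hS1, hfib3, hchildcard, hsplit (depth T), hleafdepth, hintdepth]
    ring
  rw [hfinal]
  have hcardsum : ∑ i : Fin (n - 1), (T.d - depth T (v i)) =
      ((n - 1 : ℕ) : ℤ) * T.d - ∑ i : Fin (n - 1), depth T (v i) := by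
    rw [Finset.sum_sub_distrib, Finset.sum_const, Finset.card_univ, Fintype.card_fin,
      nsmul_eq_mul]
  rw [hcardsum]
  have : ((n - 1 : ℕ) : ℤ) = (n : ℤ) - 1 := by
    omega
  rw [this]
  ring
lemma singles_coeff_lt {α : Type} (l : List α) (ex : α → ℤ) (cf : α → ℂ) {m k : ℤ}
    (hm : ∀ e ∈ l, m ≤ ex e) (hk : k < m) :
    ((l.map (fun e => (HahnSeries.single (ex e) (cf e) : LaurentSeries ℂ))).sum).coeff k = 0 := by
  induction l with
  | nil => simp
  | cons e l ih =>
    simp only [List.map_cons, List.sum_cons, HahnSeries.coeff_add]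
    rw [ih (fun x hx => hm x (List.mem_cons_of_mem e hx))]
    rw [HahnSeries.coeff_single_of_ne (by have := hm e (List.mem_cons_self); omega)]
    ring

lemma singles_coeff_at {α : Type} [DecidableEq α] (l : List α) (ex : α → ℤ) (cf : α → ℂ) {m : ℤ}
    (hm : ∀ e ∈ l, m ≤ ex e) :
    ((l.map (fun e => (HahnSeries.single (ex e) (cf e) : LaurentSeries ℂ))).sum).coeff m =
      ((l.filter (fun e => ex e = m)).map cf).sum := by
  induction l with
  | nil => simp
  | cons e l ih =>
    simp only [List.map_cons, List.sum_cons, HahnSeries.coeff_add, List.filter_cons]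
    rw [ih (fun x hx => hm x (List.mem_cons_of_mem e hx))]
    by_cases he : ex e = m
    · rw [if_pos (by simpa using he), he, HahnSeries.coeff_single_same]
      simp
    · rw [if_neg (by simpa using he), HahnSeries.coeff_single_of_ne (fun hc => he hc.symm)]
      simp

lemma singles_order {α : Type} (l : List α) (ex : α → ℤ) (cf : α → ℂ) {m : ℤ}
    (hm : ∀ e ∈ l, m ≤ ex e)
    (hne : ((l.map (fun e => (HahnSeries.single (ex e) (cf e) : LaurentSeries ℂ))).sum).coeff m ≠ 0) :
    (l.map (fun e => (HahnSeries.single (ex e) (cf e) : LaurentSeries ℂ))).sum ≠ 0 ∧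
    ((l.map (fun e => (HahnSeries.single (ex e) (cf e) : LaurentSeries ℂ))).sum).order = m := by
  set S := (l.map (fun e => (HahnSeries.single (ex e) (cf e) : LaurentSeries ℂ))).sum with hS
  have hS0 : S ≠ 0 := fun h0 => hne (by rw [h0]; simp)
  refine ⟨hS0, ?_⟩
  have hle : S.order ≤ m := HahnSeries.order_le_of_coeff_ne_zero hne
  rcases lt_or_eq_of_le hle with hlt | heq
  · exfalso
    exact (mt HahnSeries.coeff_order_eq_zero.mp hS0) (singles_coeff_lt l ex cf hm hlt)
  · exact heq
lemma colRed_apply {m : ℕ} (N : Matrix (Fin m) (Fin m) (LaurentSeries ℂ)) (p q : Fin m)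
    (r c : Fin m) : colRed N p q r c = if c = p then N r p - N r q else N r c :=
  Matrix.updateCol_apply

lemma foldl_colRed_take (av : ℕ → Sym2 T.V → ℂ) (a b : Fin (n - 1) → Fin n)
    (ha_inj : Function.Injective a)
    (hb : ∀ i j : Fin (n - 1), j ≤ i → b i ≠ a j) :
    ∀ k : ℕ, k ≤ n - 1 →
      (∀ r c, (∀ i : Fin (n - 1), (i : ℕ) < k → c ≠ a i) →
        (((List.finRange (n - 1)).take k).foldl
          (fun N i => colRed N (a i) (b i)) (Mmat T av)) r c = Mmat T av r c) ∧
      (∀ i : Fin (n - 1), (i : ℕ) < k → ∀ r,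
        (((List.finRange (n - 1)).take k).foldl
          (fun N i => colRed N (a i) (b i)) (Mmat T av)) r (a i)
          = Mmat T av r (a i) - Mmat T av r (b i)) := by
  intro k
  induction k with
  | zero =>
    intro _
    constructor
    · intro r c _; simp
    · intro i hi; omega
  | succ k ih =>
    intro hk1
    have hk : k < n - 1 := by omega
    obtain ⟨ih1, ih2⟩ := ih (by omega)
    set ek : Fin (n - 1) := ⟨k, hk⟩ with hek
    have htake : (List.finRange (n - 1)).take (k + 1) =
        (List.finRange (n - 1)).take k ++ [ek] := by
      rw [List.take_succ]
      congr
      rw [List.getElem?_eq_getElem (by simpa using hk)]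
      simp [hek]
    rw [htake]
    have hfold : ∀ (N : Matrix (Fin n) (Fin n) (LaurentSeries ℂ)) l,
        (l ++ [ek]).foldl (fun N i => colRed N (a i) (b i)) N =
        colRed (l.foldl (fun N i => colRed N (a i) (b i)) N) (a ek) (b ek) := by
      intro N l
      rw [List.foldl_append]
      rfl
    rw [hfold]
    set Nk := ((List.finRange (n - 1)).take k).foldl
      (fun N i => colRed N (a i) (b i)) (Mmat T av) with hNk
    constructor
    · intro r c hc
      rw [colRed_apply, if_neg (hc ek (by simp [hek]))]
      exact ih1 r c (fun i hi => hc i (by omega))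
    · intro i hi r
      by_cases hik : (i : ℕ) < k
      · rw [colRed_apply, if_neg]
        · exact ih2 i hik r
        · intro he
          have : i = ek := ha_inj he
          rw [this] at hik
          simp [hek] at hik
      · have hieq : i = ek := by
          apply Fin.ext
          simp [hek]; omega
        rw [hieq, colRed_apply, if_pos rfl]
        have e1 : Nk r (a ek) = Mmat T av r (a ek) := by
          apply ih1
          intro i' hi' he
          have h3 := ha_inj he
          have h4 : (i' : ℕ) = k := by rw [← h3, hek]
          omega
        have e2 : Nk r (b ek) = Mmat T av r (b ek) := by
          apply ih1
          intro i' hi'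
          apply hb ek i'
          exact Fin.le_def.mpr (by simp [hek]; omega)
        rw [e1, e2]

lemma Mstar_eq_off (av : ℕ → Sym2 T.V → ℂ) (a b : Fin (n - 1) → Fin n)
    (ha_inj : Function.Injective a)
    (hb : ∀ i j : Fin (n - 1), j ≤ i → b i ≠ a j)
    (c : Fin n) (hc : ∀ i, c ≠ a i) (r : Fin n) :
    Mstar T av a b r c = Mmat T av r c := by
  have h := (foldl_colRed_take T av a b ha_inj hb (n - 1) le_rfl).1 r c (fun i _ => hc i)
  rwa [List.take_of_length_le (by simp)] at h

lemma Mstar_eq_col (av : ℕ → Sym2 T.V → ℂ) (a b : Fin (n - 1) → Fin n)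
    (ha_inj : Function.Injective a)
    (hb : ∀ i j : Fin (n - 1), j ≤ i → b i ≠ a j)
    (i : Fin (n - 1)) (r : Fin n) :
    Mstar T av a b r (a i) = Mmat T av r (a i) - Mmat T av r (b i) := by
  have h := (foldl_colRed_take T av a b ha_inj hb (n - 1) le_rfl).2 i i.isLt r
  rwa [List.take_of_length_le (by simp)] at h
lemma internal_ne_leaf {w : T.V} (hw : isInternal T w) (i : Fin n) : w ≠ T.leaf i := by
  intro he
  exact internal_not_deg_one T hw (he ▸ T.leaf_deg i)

open Classical in
lemma child_split (v : Fin (n - 1) → T.V) (hv_int : ∀ i, isInternal T (v i))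
    (hv_inj : Function.Injective v)
    (hv_surj : ∀ w : T.V, isInternal T w → ∃ i, v i = w)
    (hv_order : ∀ i j : Fin (n - 1), treeLE T (v i) (v j) → j ≤ i)
    (a : Fin (n - 1) → Fin n) (ha_inj : Function.Injective a)
    (ha_below : ∀ i, treeLE T (v i) (T.leaf (a i)))
    (b : Fin (n - 1) → Fin n)
    (hb : ∀ i, treeLE T (v i) (T.leaf (b i)) ∧
      ∀ j : Fin (n - 1), j ≤ i → b i ≠ a j)
    (i : Fin (n - 1)) :
    ∃ ca cb : T.V, childRel T (v i) ca ∧ treeLE T ca (T.leaf (a i)) ∧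
      childRel T (v i) cb ∧ treeLE T cb (T.leaf (b i)) ∧ ca ≠ cb := by
  obtain ⟨ca, hca, hcaL⟩ := child_step T (ha_below i) (internal_ne_leaf T (hv_int i) (a i))
  obtain ⟨cb, hcb, hcbL⟩ := child_step T (hb i).1 (internal_ne_leaf T (hv_int i) (b i))
  refine ⟨ca, cb, hca, hcaL, hcb, hcbL, ?_⟩
  intro he
  subst he
  -- ca = cb =: u
  set u := ca with hu
  have habne : a i ≠ b i := fun he => (hb i).2 i le_rfl (by rw [he])
  rcases internal_or_leaf T u with hint | hleaf
  swap
  · -- u is a leaf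
    have h1 := deg_one_end T hleaf hcaL
    have h2 := deg_one_end T hleaf hcbL
    exact habne (T.leaf_inj (h1 ▸ h2))
  -- u is internal
  have hult : ¬ treeLE T u (v i) := not_treeLE_of_child T hca
  have huvi : u ≠ v i := child_ne T hca
  set J : Finset (Fin (n - 1)) := Finset.univ.filter (fun j => treeLE T u (v j)) with hJ
  have hmemJ : ∀ j, j ∈ J ↔ treeLE T u (v j) := by
    intro j; simp [hJ]
  have hIset : (below T u).filter (fun z => isInternal T z) = J.image v := by
    ext z
    rw [Finset.mem_filter, mem_below, Finset.mem_image]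
    constructor
    · rintro ⟨hz, hint'⟩
      obtain ⟨j, hj⟩ := hv_surj z hint'
      exact ⟨j, (hmemJ j).mpr (hj ▸ hz), hj⟩
    · rintro ⟨j, hj, rfl⟩
      exact ⟨(hmemJ j).mp hj, hv_int j⟩
  have hIcard : ((below T u).filter (fun z => isInternal T z)).card = J.card := by
    rw [hIset, Finset.card_image_of_injective _ hv_inj]
  -- the leaves exhibited
  have hjle : ∀ j ∈ J, j ≤ i := by
    intro j hj
    exact hv_order i j (treeLE_trans T (treeLE_of_child T hca) ((hmemJ j).mp hj))
  have hinotJ : i ∉ J := fun hi => hult ((hmemJ i).mp hi)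
  set F : Finset T.V :=
    insert (T.leaf (a i)) (insert (T.leaf (b i)) (J.image (fun j => T.leaf (a j)))) with hF
  have haiim : T.leaf (a i) ∉ J.image (fun j => T.leaf (a j)) := by
    rw [Finset.mem_image]
    rintro ⟨j, hj, he⟩
    have : j = i := ha_inj (T.leaf_inj he)
    exact hinotJ (this ▸ hj)
  have hbiim : T.leaf (b i) ∉ J.image (fun j => T.leaf (a j)) := by
    rw [Finset.mem_image]
    rintro ⟨j, hj, he⟩
    exact (hb i).2 j (hjle j hj) (T.leaf_inj he).symm
  have haibi : T.leaf (a i) ≠ T.leaf (b i) := fun he => habne (T.leaf_inj he)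
  have hFcard : F.card = J.card + 2 := by
    rw [hF, Finset.card_insert_of_notMem (by
        rw [Finset.mem_insert]
        rintro (he | he)
        · exact haibi he
        · exact haiim he),
      Finset.card_insert_of_notMem hbiim,
      Finset.card_image_of_injective _ (fun x y he => ha_inj (T.leaf_inj he))]
  have hFsub : F ⊆ (below T u).filter (fun z => T.G.degree z = 1) := by
    intro z hz
    rw [Finset.mem_filter, mem_below]
    rw [hF, Finset.mem_insert, Finset.mem_insert, Finset.mem_image] at hz
    rcases hz with rfl | rfl | ⟨j, hj, rfl⟩
    · exact ⟨hcaL, T.leaf_deg _⟩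
    · exact ⟨hcbL, T.leaf_deg _⟩
    · exact ⟨treeLE_trans T ((hmemJ j).mp hj) (ha_below j), T.leaf_deg _⟩
  have hle := Finset.card_le_card hFsub
  rw [hFcard, count_lemma T u, hIcard] at hle
  omega
lemma tail_data {w z c : T.V} (hwl : treeLE T w z) (hc : childRel T w c)
    (hcl : treeLE T c z) :
    ∃ l : List (Sym2 T.V),
      (rootPath T z).edges = (rootPath T w).edges ++ l ∧
      l.Nodup ∧ s(w, c) ∈ l ∧ ∀ e ∈ l, depth T w ≤ T.d - hEdge T e := by
  have hle : w ∈ (rootPath T z).support := (treeLE_iff T).mp hwl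
  have hspec := (rootPath T z).take_spec hle
  rw [rp_takeUntil T w hle] at hspec
  set q := (rootPath T z).dropUntil w hle with hq
  clear_value q
  refine ⟨q.edges, ?_, ?_, ?_, ?_⟩
  · rw [← hspec, Walk.edges_append]
  · have hnd : ((rootPath T z).edges).Nodup := (rp_isPath T z).isTrail.edges_nodup
    rw [← hspec, Walk.edges_append] at hnd
    exact (List.nodup_append.mp hnd).2.1
  · rcases q with _ | ⟨adj, q'⟩
    · exact absurd hcl (not_treeLE_of_child T hc)
    · rename_i c0
      have hcp : ((rootPath T w).concat adj).IsPath := by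
        have : (((rootPath T w).concat adj).append q').IsPath := by
          rw [Walk.concat_append, hspec]; exact rp_isPath T z
        exact this.of_append_left
      have hc0 : childRel T w c0 := ⟨adj, (rp_unique T _ hcp).symm⟩
      have hc0mem : c0 ∈ (rootPath T z).support := by
        rw [← hspec, Walk.mem_support_append_iff]
        right
        rw [Walk.support_cons]
        exact List.mem_cons_of_mem _ (Walk.start_mem_support q')
      have hcmem : c ∈ (rootPath T z).support := (treeLE_iff T).mp hcl
      have : c0 = c := by
        apply anc_eq_of_length T hc0mem hcmem
        rw [childRel_length T hc0, childRel_length T hc]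
      rw [Walk.edges_cons, ← this]
      exact List.mem_cons_self
  · have hp2 : ((rootPath T w).append q).IsPath := by rw [hspec]; exact rp_isPath T z
    exact (descend T q hp2).2.2

lemma exists_first_edge {z : T.V} (hz : z ≠ T.root) :
    ∃ e ∈ (rootPath T z).edges, hEdge T e = T.d := by
  rcases hp : rootPath T z with _ | ⟨adj, q⟩
  · exact absurd rfl hz
  · rename_i c0
    refine ⟨s(T.root, c0), ?_, ?_⟩
    · rw [Walk.edges_cons]
      exact List.mem_cons_self
    · rw [hEdge_mk, depth_root]
      rw [min_eq_left (depth_nonneg T c0)]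
      ring

lemma order_eq_of (S : LaurentSeries ℂ) (m : ℤ) (h1 : S.coeff m ≠ 0)
    (h2 : ∀ k < m, S.coeff k = 0) : S ≠ 0 ∧ S.order = m := by
  have hS0 : S ≠ 0 := fun h0 => h1 (by rw [h0]; simp)
  refine ⟨hS0, ?_⟩
  have hle : S.order ≤ m := HahnSeries.order_le_of_coeff_ne_zero h1
  rcases lt_or_eq_of_le hle with hlt | heq
  · exact absurd (h2 _ hlt) (mt HahnSeries.coeff_order_eq_zero.mp hS0)
  · exact heq

lemma order_prod {ι : Type} (s : Finset ι) (f : ι → LaurentSeries ℂ)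
    (h : ∀ i ∈ s, f i ≠ 0) :
    (∏ i ∈ s, f i).order = ∑ i ∈ s, (f i).order := by
  classical
  induction s using Finset.induction_on with
  | empty => simp [HahnSeries.order_one]
  | insert _ _ hx ih =>
    rename_i x s
    rw [Finset.prod_insert hx, Finset.sum_insert hx]
    rw [HahnSeries.order_mul (h x (Finset.mem_insert_self x s))
      (Finset.prod_ne_zero_iff.mpr (fun i hi => h i (Finset.mem_insert_of_mem hi)))]
    rw [ih (fun i hi => h i (Finset.mem_insert_of_mem hi))]

lemma listX_coeff (j : ℕ) (l : List (Sym2 T.V)) (e0 : Sym2 T.V) (hn : l.Nodup) :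
    MvPolynomial.coeff (Finsupp.single ((j, e0) : ℕ × Sym2 T.V) 1)
      ((l.map (fun e => (MvPolynomial.X ((j, e) : ℕ × Sym2 T.V) : MvPolynomial (ℕ × Sym2 T.V) ℂ))).sum)
      = if e0 ∈ l then 1 else 0 := by
  classical
  induction l with
  | nil => simp
  | cons e l ih =>
    simp only [List.map_cons, List.sum_cons]
    rw [MvPolynomial.coeff_add, ih hn.of_cons, MvPolynomial.coeff_X']
    by_cases he : e = e0
    · subst he
      rw [if_pos rfl, if_pos (List.mem_cons_self), if_neg (List.Nodup.notMem hn)]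
      ring
    · rw [if_neg (fun hc => he (Prod.ext_iff.mp ((Finsupp.single_left_injective
        (one_ne_zero)).eq_iff.mp hc)).2)]
      by_cases h0 : e0 ∈ l
      · rw [if_pos h0, if_pos (List.mem_cons_of_mem e h0)]; ring
      · rw [if_neg h0, if_neg (fun hc => by
          rcases List.mem_cons.mp hc with hc' | hc'
          · exact he hc'.symm
          · exact h0 hc')]
        ring

lemma Mmat_zero (av : ℕ → Sym2 T.V → ℂ) {r : Fin n} (hr : r.val = 0) (c : Fin n) :
    Mmat T av r c = 1 := by rw [Mmat, if_pos hr]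

lemma Mmat_one (av : ℕ → Sym2 T.V → ℂ) {r : Fin n} (hr : r.val = 1) (c : Fin n) :
    Mmat T av r c = xval T av 1 c := by
  rw [Mmat, if_neg (by omega), if_pos hr]

lemma Mmat_two (av : ℕ → Sym2 T.V → ℂ) {r : Fin n} (hr : r.val = 2) (c : Fin n) :
    Mmat T av r c = (xval T av 1 c) ^ 2 := by
  rw [Mmat, if_neg (by omega), if_neg (by omega), if_pos hr]

lemma Mmat_high (av : ℕ → Sym2 T.V → ℂ) {r : Fin n} (hr : 3 ≤ r.val) (c : Fin n) :
    Mmat T av r c = xval T av (r.val - 1) c := by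
  rw [Mmat, if_neg (by omega), if_neg (by omega), if_neg (by omega)]
theorem stmt6' (hn : 4 ≤ n)
    (D : ℤ) (hD : D = ∑ e ∈ T.G.edgeFinset, T.weight e)
    (v : Fin (n - 1) → T.V)
    (hv_int : ∀ i, isInternal T (v i))
    (hv_inj : Function.Injective v)
    (hv_surj : ∀ w : T.V, isInternal T w → ∃ i, v i = w)
    (hv_order : ∀ i j : Fin (n - 1), treeLE T (v i) (v j) → j ≤ i)
    (a : Fin (n - 1) → Fin n)
    (ha_inj : Function.Injective a)
    (ha_below : ∀ i, treeLE T (v i) (T.leaf (a i)))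
    (b : Fin (n - 1) → Fin n)
    (hb : ∀ i, treeLE T (v i) (T.leaf (b i)) ∧
      ∀ j : Fin (n - 1), j ≤ i → b i ≠ a j) :
    ∃ P : MvPolynomial (ℕ × Sym2 T.V) ℂ, P ≠ 0 ∧
      ∀ av : ℕ → Sym2 T.V → ℂ,
        MvPolynomial.eval (fun q : ℕ × Sym2 T.V => av q.1 q.2) P ≠ 0 →
          ∀ σ : Equiv.Perm (Fin n),
            (∏ i, Mstar T av a b i (σ i)) ≠ 0 →
              (∏ i, Mstar T av a b i (σ i)).order =
                -((∑ i : Fin (n - 1), (T.d - depth T (v i))) + T.d) ∧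
              (∑ i : Fin (n - 1), (T.d - depth T (v i))) + T.d = D := by
  classical
  have hb' : ∀ i j : Fin (n - 1), j ≤ i → b i ≠ a j := fun i j hj => (hb i).2 j hj
  -- children data
  choose ca cb hca hcaL hcb hcbL hcc using
    child_split T v hv_int hv_inj hv_surj hv_order a ha_inj ha_below b hb
  -- tails
  choose la hla1 hla2 hla3 hla4 using
    (fun i => tail_data T (ha_below i) (hca i) (hcaL i))
  choose lb hlb1 hlb2 hlb3 hlb4 using
    (fun i => tail_data T (hb i).1 (hcb i) (hcbL i))
  set m : Fin (n - 1) → ℤ := fun i => depth T (v i) - T.d with hm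
  have hedge_a : ∀ i, -(hEdge T s(v i, ca i)) = m i := by
    intro i
    rw [hEdge_mk]
    have hd := depth_child T (hca i)
    have hw := T.weight_nonneg s(v i, ca i) (childRel_adj T (hca i))
    rw [min_eq_left (by omega)]
    simp [hm]
  have hea_notin : ∀ i, s(v i, ca i) ∉ lb i := by
    intro i hmem
    have h1 : s(v i, ca i) ∈ (rootPath T (T.leaf (b i))).edges := by
      rw [hlb1 i]; exact List.mem_append_right _ hmem
    have hsup : ca i ∈ (rootPath T (T.leaf (b i))).support :=
      Walk.snd_mem_support_of_mem_edges _ h1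
    have hsup' : cb i ∈ (rootPath T (T.leaf (b i))).support := (treeLE_iff T).mp (hcbL i)
    exact hcc i (anc_eq_of_length T hsup hsup'
      (by rw [childRel_length T (hca i), childRel_length T (hcb i)]))
  set lfa : Fin (n - 1) → List (Sym2 T.V) :=
    fun i => (la i).filter (fun e => -(hEdge T e) = m i) with hlfa
  set lfb : Fin (n - 1) → List (Sym2 T.V) :=
    fun i => (lb i).filter (fun e => -(hEdge T e) = m i) with hlfb
  set gfa : Fin (n - 1) → List (Sym2 T.V) :=
    fun i => ((rootPath T (T.leaf (a i))).edges).filter (fun e => -(hEdge T e) = -T.d) with hgfa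
  set gfb : Fin (n - 1) → List (Sym2 T.V) :=
    fun i => ((rootPath T (T.leaf (b i))).edges).filter (fun e => -(hEdge T e) = -T.d) with hgfb
  set lam : ℕ → Fin (n - 1) → MvPolynomial (ℕ × Sym2 T.V) ℂ := fun j i =>
    ((lfa i).map (fun e => MvPolynomial.X ((j, e) : ℕ × Sym2 T.V))).sum -
    ((lfb i).map (fun e => MvPolynomial.X ((j, e) : ℕ × Sym2 T.V))).sum with hlam
  set mu : Fin (n - 1) → MvPolynomial (ℕ × Sym2 T.V) ℂ := fun i =>
    ((gfa i).map (fun e => MvPolynomial.X (((1 : ℕ), e) : ℕ × Sym2 T.V))).sum +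
    ((gfb i).map (fun e => MvPolynomial.X (((1 : ℕ), e) : ℕ × Sym2 T.V))).sum with hmu
  have hroot_int : isInternal T T.root := Or.inl rfl
  -- nonvanishing of lam
  have hlam_ne : ∀ (j : ℕ) (i : Fin (n - 1)), lam j i ≠ 0 := by
    intro j i h0
    have hmemf : s(v i, ca i) ∈ lfa i := by
      rw [hlfa]
      exact List.mem_filter.mpr ⟨hla3 i, by simpa using hedge_a i⟩
    have hco := congrArg
      (MvPolynomial.coeff (Finsupp.single ((j, s(v i, ca i)) : ℕ × Sym2 T.V) 1)) h0
    rw [hlam] at hco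
    simp only [MvPolynomial.coeff_sub, MvPolynomial.coeff_zero] at hco
    rw [listX_coeff T j (lfa i) _ ((hla2 i).filter _),
      listX_coeff T j (lfb i) _ ((hlb2 i).filter _)] at hco
    rw [if_pos hmemf, if_neg (fun hc => hea_notin i (List.mem_of_mem_filter hc))] at hco
    norm_num at hco
  -- nonvanishing of mu
  choose e0 he0mem he0h using (fun i : Fin (n - 1) => exists_first_edge T
    (show T.leaf (a i) ≠ T.root from fun h => (internal_ne_leaf T hroot_int (a i)) h.symm))
  have hmu_ne : ∀ i : Fin (n - 1), mu i ≠ 0 := by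
    intro i h0
    have hmemf : e0 i ∈ gfa i := by
      rw [hgfa]
      exact List.mem_filter.mpr ⟨he0mem i, by simp [he0h i]⟩
    have hco := congrArg
      (MvPolynomial.coeff (Finsupp.single (((1 : ℕ), e0 i) : ℕ × Sym2 T.V) 1)) h0
    rw [hmu] at hco
    simp only [MvPolynomial.coeff_add, MvPolynomial.coeff_zero] at hco
    rw [listX_coeff T 1 (gfa i) _
        (((rp_isPath T (T.leaf (a i))).isTrail.edges_nodup).filter _),
      listX_coeff T 1 (gfb i) _
        (((rp_isPath T (T.leaf (b i))).isTrail.edges_nodup).filter _)] at hco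
    rw [if_pos hmemf] at hco
    by_cases h2 : e0 i ∈ gfb i
    · rw [if_pos h2] at hco; norm_num at hco
    · rw [if_neg h2] at hco; norm_num at hco
  refine ⟨(∏ i, mu i) * ∏ j ∈ Finset.range (n - 1), ∏ i, lam j i, ?_, ?_⟩
  · exact mul_ne_zero (Finset.prod_ne_zero_iff.mpr fun i _ => hmu_ne i)
      (Finset.prod_ne_zero_iff.mpr fun j _ =>
        Finset.prod_ne_zero_iff.mpr fun i _ => hlam_ne j i)
  intro av heval σ hprod
  set f : ℕ × Sym2 T.V → ℂ := fun q => av q.1 q.2 with hf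
  have hmu_ev : ∀ i, MvPolynomial.eval f (mu i) ≠ 0 := by
    intro i h0
    apply heval
    rw [map_mul]
    apply mul_eq_zero_of_left
    rw [map_prod]
    exact Finset.prod_eq_zero (Finset.mem_univ i) h0
  have hlam_ev : ∀ j < n - 1, ∀ i, MvPolynomial.eval f (lam j i) ≠ 0 := by
    intro j hj i h0
    apply heval
    rw [map_mul]
    apply mul_eq_zero_of_right
    rw [map_prod]
    apply Finset.prod_eq_zero (Finset.mem_range.mpr hj)
    rw [map_prod]
    exact Finset.prod_eq_zero (Finset.mem_univ i) h0
  have hevalX : ∀ (j : ℕ) (l : List (Sym2 T.V)),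
      MvPolynomial.eval f ((l.map (fun e => MvPolynomial.X ((j, e) : ℕ × Sym2 T.V))).sum)
        = (l.map (fun e => av j e)).sum := by
    intro j l
    rw [map_list_sum, List.map_map]
    congr 1
    apply List.map_congr_left
    intro e _
    simp [hf]
  have hfac : ∀ r : Fin n, Mstar T av a b r (σ r) ≠ 0 :=
    fun r => Finset.prod_ne_zero_iff.mp hprod r (Finset.mem_univ r)
  set r0 : Fin n := ⟨0, by omega⟩ with hr0
  have hrow0 : ∀ i : Fin (n - 1), σ r0 ≠ a i := by
    intro i he
    apply hfac r0
    rw [he, Mstar_eq_col T av a b ha_inj hb' i r0, Mmat_zero T av rfl, Mmat_zero T av rfl,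
      sub_self]
  have hMstar0 : Mstar T av a b r0 (σ r0) = 1 := by
    rw [Mstar_eq_off T av a b ha_inj hb' (σ r0) hrow0 r0, Mmat_zero T av rfl]
  -- σ r lies in the image of a for r ≠ r0
  have hAimg : ∀ r : Fin n, ∃ i : Fin (n - 1), r ≠ r0 → σ r = a i := by
    intro r
    by_cases hr : r = r0
    · exact ⟨⟨0, by omega⟩, fun h => absurd hr h⟩
    by_contra hno
    push_neg at hno
    set A : Finset (Fin n) := Finset.univ.image a with hA
    have hnotA : σ r ∉ A := by
      rw [hA, Finset.mem_image]
      rintro ⟨i, _, he⟩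
      exact (hno i).2 he.symm
    have hnotA0 : σ r0 ∉ A := by
      rw [hA, Finset.mem_image]
      rintro ⟨i, _, he⟩
      exact hrow0 i he.symm
    have hsub : ({σ r, σ r0} : Finset (Fin n)) ⊆ Finset.univ \ A := by
      intro x hx
      rw [Finset.mem_sdiff]
      rcases Finset.mem_insert.mp hx with rfl | hx
      · exact ⟨Finset.mem_univ _, hnotA⟩
      · rw [Finset.mem_singleton] at hx
        subst hx
        exact ⟨Finset.mem_univ _, hnotA0⟩
    have hcard2 : ({σ r, σ r0} : Finset (Fin n)).card = 2 :=
      Finset.card_pair (fun he => hr (σ.injective he))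
    have hcard1 : (Finset.univ \ A).card = 1 := by
      rw [Finset.card_sdiff_of_subset (Finset.subset_univ A), hA,
        Finset.card_image_of_injective _ ha_inj]
      simp only [Finset.card_univ, Fintype.card_fin]
      omega
    have := Finset.card_le_card hsub
    omega
  choose idx hidx using hAimg
  have hmval : ∀ i, m i = depth T (v i) - T.d := fun i => rfl
  -- order of delta
  have hbound_a : ∀ i, ∀ e ∈ la i, m i ≤ -(hEdge T e) := by
    intro i e he
    have h1 := hla4 i e he
    have h2 := hmval i
    omega
  have hbound_b : ∀ i, ∀ e ∈ lb i, m i ≤ -(hEdge T e) := by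
    intro i e he
    have h1 := hlb4 i e he
    have h2 := hmval i
    omega
  have hdelta : ∀ (j : ℕ) (i : Fin (n - 1)), MvPolynomial.eval f (lam j i) ≠ 0 →
      (xval T av j (a i) - xval T av j (b i)) ≠ 0 ∧
      (xval T av j (a i) - xval T av j (b i)).order = m i := by
    intro j i hne
    have hsa : xval T av j (a i) =
        ((rootPath T (v i)).edges.map (fun e => HahnSeries.single (-(hEdge T e)) (av j e))).sum +
        ((la i).map (fun e => HahnSeries.single (-(hEdge T e)) (av j e))).sum := by
      rw [xval, hla1 i, List.map_append, List.sum_append]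
    have hsb : xval T av j (b i) =
        ((rootPath T (v i)).edges.map (fun e => HahnSeries.single (-(hEdge T e)) (av j e))).sum +
        ((lb i).map (fun e => HahnSeries.single (-(hEdge T e)) (av j e))).sum := by
      rw [xval, hlb1 i, List.map_append, List.sum_append]
    have hDel : xval T av j (a i) - xval T av j (b i) =
        ((la i).map (fun e => HahnSeries.single (-(hEdge T e)) (av j e))).sum -
        ((lb i).map (fun e => HahnSeries.single (-(hEdge T e)) (av j e))).sum := by
      rw [hsa, hsb, add_sub_add_left_eq_sub]
    have hco : (xval T av j (a i) - xval T av j (b i)).coeff (m i) =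
        MvPolynomial.eval f (lam j i) := by
      rw [hDel, HahnSeries.coeff_sub,
        singles_coeff_at (la i) (fun e => -(hEdge T e)) (av j) (hbound_a i),
        singles_coeff_at (lb i) (fun e => -(hEdge T e)) (av j) (hbound_b i),
        hlam]
      rw [map_sub, hevalX, hevalX, hlfa, hlfb]
    have hlow : ∀ k < m i, (xval T av j (a i) - xval T av j (b i)).coeff k = 0 := by
      intro k hk
      rw [hDel, HahnSeries.coeff_sub,
        singles_coeff_lt (la i) (fun e => -(hEdge T e)) (av j) (hbound_a i) hk,
        singles_coeff_lt (lb i) (fun e => -(hEdge T e)) (av j) (hbound_b i) hk,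
        sub_self]
    exact order_eq_of _ _ (by rw [hco]; exact hne) hlow
  -- order of the sum (for the squared row)
  have hgbound : ∀ (c : Fin n), ∀ e ∈ (rootPath T (T.leaf c)).edges, -T.d ≤ -(hEdge T e) := by
    intro c e he
    have := hEdge_le_d T he
    omega
  have hsig2 : ∀ i : Fin (n - 1),
      (xval T av 1 (a i) + xval T av 1 (b i)) ≠ 0 ∧
      (xval T av 1 (a i) + xval T av 1 (b i)).order = -T.d := by
    intro i
    have hco : (xval T av 1 (a i) + xval T av 1 (b i)).coeff (-T.d) =
        MvPolynomial.eval f (mu i) := by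
      rw [xval, xval, HahnSeries.coeff_add,
        singles_coeff_at _ (fun e => -(hEdge T e)) (av 1) (hgbound (a i)),
        singles_coeff_at _ (fun e => -(hEdge T e)) (av 1) (hgbound (b i)),
        hmu]
      rw [map_add, hevalX, hevalX, hgfa, hgfb]
    have hlow : ∀ k < -T.d, (xval T av 1 (a i) + xval T av 1 (b i)).coeff k = 0 := by
      intro k hk
      rw [xval, xval, HahnSeries.coeff_add,
        singles_coeff_lt _ (fun e => -(hEdge T e)) (av 1) (hgbound (a i)) hk,
        singles_coeff_lt _ (fun e => -(hEdge T e)) (av 1) (hgbound (b i)) hk,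
        add_zero]
    exact order_eq_of _ _ (by rw [hco]; exact hmu_ev i) hlow
  -- per-row orders
  have hord : ∀ r : Fin n, r ≠ r0 →
      (Mstar T av a b r (σ r)).order = m (idx r) + (if r.val = 2 then -T.d else 0) := by
    intro r hr
    have hval : r.val ≠ 0 := by
      intro h
      exact hr (Fin.ext (by rw [h, hr0]))
    have hcol : σ r = a (idx r) := hidx r hr
    have hcolred := Mstar_eq_col T av a b ha_inj hb' (idx r) r
    have hrcases : r.val = 1 ∨ r.val = 2 ∨ 3 ≤ r.val := by omega
    rcases hrcases with h1 | h2 | h3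
    · have hd := hdelta 1 (idx r) (hlam_ev 1 (by omega) (idx r))
      rw [hcol, hcolred, Mmat_one T av h1, Mmat_one T av h1, hd.2, if_neg (by omega),
        add_zero]
    · have hd := hdelta 1 (idx r) (hlam_ev 1 (by omega) (idx r))
      have hs := hsig2 (idx r)
      rw [hcol, hcolred, Mmat_two T av h2, Mmat_two T av h2]
      have hfact : (xval T av 1 (a (idx r)))^2 - (xval T av 1 (b (idx r)))^2 =
          (xval T av 1 (a (idx r)) - xval T av 1 (b (idx r))) *
          (xval T av 1 (a (idx r)) + xval T av 1 (b (idx r))) := by ring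
      rw [hfact, HahnSeries.order_mul hd.1 hs.1, hd.2, hs.2, if_pos h2]
    · have hjlt : r.val - 1 < n - 1 := by
        have := r.isLt
        omega
      have hd := hdelta (r.val - 1) (idx r) (hlam_ev (r.val - 1) hjlt (idx r))
      rw [hcol, hcolred, Mmat_high T av h3, Mmat_high T av h3, hd.2, if_neg (by omega),
        add_zero]
  constructor
  · -- the order computation
    rw [order_prod Finset.univ _ (fun r _ => hfac r)]
    rw [← Finset.add_sum_erase Finset.univ _ (Finset.mem_univ r0)]
    have h01 : (Mstar T av a b r0 (σ r0)).order = 0 := by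
      rw [hMstar0]
      exact HahnSeries.order_one
    rw [h01, zero_add]
    rw [Finset.sum_congr rfl (fun r hrr => hord r (Finset.mem_erase.mp hrr).1)]
    rw [Finset.sum_add_distrib]
    set two : Fin n := ⟨2, by omega⟩ with htwo
    have hind : ∑ r ∈ Finset.univ.erase r0, (if r.val = 2 then -T.d else 0) = -T.d := by
      rw [Finset.sum_eq_single two]
      · rw [if_pos rfl]
      · intro r _ hne
        rw [if_neg (fun h => hne (Fin.ext (by rw [h, htwo])))]
      · intro habs
        exfalso
        apply habs
        rw [Finset.mem_erase]
        refine ⟨fun h => ?_, Finset.mem_univ _⟩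
        rw [htwo, hr0] at h
        simp only [Fin.mk.injEq] at h
        omega
    have hinj2 : ∀ x ∈ Finset.univ.erase r0, ∀ y ∈ Finset.univ.erase r0,
        idx x = idx y → x = y := by
      intro x hx y hy he
      apply σ.injective
      rw [hidx x (Finset.mem_erase.mp hx).1, hidx y (Finset.mem_erase.mp hy).1, he]
    have himg : (Finset.univ.erase r0).image idx = Finset.univ := by
      apply Finset.eq_univ_of_card
      rw [Finset.card_image_of_injOn (fun x hx y hy he => hinj2 x hx y hy he),
        Finset.card_erase_of_mem (Finset.mem_univ r0), Finset.card_univ, Fintype.card_fin,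
        Fintype.card_fin]
    have hmsum : ∑ r ∈ Finset.univ.erase r0, m (idx r) = ∑ i : Fin (n - 1), m i := by
      rw [← himg, Finset.sum_image hinj2]
    rw [hind, hmsum]
    have hneg : ∑ i : Fin (n - 1), m i = -∑ i : Fin (n - 1), (T.d - depth T (v i)) := by
      rw [← Finset.sum_neg_distrib]
      apply Finset.sum_congr rfl
      intro i _
      rw [hm]
      ring
    rw [hneg]
    ring
  · rw [hD]
    exact weight_identity T (by omega) v hv_int hv_inj hv_surj

end Dev

/-- with `v`, `α` (written `a`), and `b` as in the paper, there is a
nonzero polynomial `P` over `ℂ` in the variables `a_j(e)` such that, whenever `P`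
does not vanish at the chosen values, every nonzero permutation product of entries
of the column reduction `M*` of `M` has `t`-adic valuation exactly
`-(Σ_{i=1}^{n-1} h(v_i) + d) = -D`. -/
theorem stmt6 (n : ℕ) (hn : 4 ≤ n) (T : UltraTree n)
    (D : ℤ) (hD : D = ∑ e ∈ T.G.edgeFinset, T.weight e)
    (v : Fin (n - 1) → T.V)
    (hv_int : ∀ i, isInternal T (v i))
    (hv_inj : Function.Injective v)
    (hv_surj : ∀ w : T.V, isInternal T w → ∃ i, v i = w)
    (hv_order : ∀ i j : Fin (n - 1), treeLE T (v i) (v j) → j ≤ i)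
    (a : Fin (n - 1) → Fin n)
    (ha_inj : Function.Injective a)
    (ha_below : ∀ i, treeLE T (v i) (T.leaf (a i)))
    (b : Fin (n - 1) → Fin n)
    (hb : ∀ i, treeLE T (v i) (T.leaf (b i)) ∧
      ∀ j : Fin (n - 1), j ≤ i → b i ≠ a j) :
    ∃ P : MvPolynomial (ℕ × Sym2 T.V) ℂ, P ≠ 0 ∧
      ∀ av : ℕ → Sym2 T.V → ℂ,
        MvPolynomial.eval (fun q : ℕ × Sym2 T.V => av q.1 q.2) P ≠ 0 →
          ∀ σ : Equiv.Perm (Fin n),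
            (∏ i, Mstar T av a b i (σ i)) ≠ 0 →
              (∏ i, Mstar T av a b i (σ i)).order =
                -((∑ i : Fin (n - 1), (T.d - depth T (v i))) + T.d) ∧
              (∑ i : Fin (n - 1), (T.d - depth T (v i))) + T.d = D :=
  stmt6' T hn D hD v hv_int hv_inj hv_surj hv_order a ha_inj ha_below b hb
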